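/- Let a ∈ (0,1), δ ≥ 1, and let (ξₜ) be defined by ξ₀ ≥ 0 arbitrary and ξ_{t+1}(ξ_{t+1}-a)/(1-ξ_{t+1}) = ξₜ²/δ with ξ_{t+1} ∈ [a,1). Then ξₜ ∈ [a,1) for all t ≥ 1, the sequence converges to ξ(δ) = (√((δ-1)² + 4δa) - (δ-1))/2, and |ξₜ - ξ(δ)| ≤ ((1/√δ)(1 - (4/(5+√5))·(a/√δ)))ᵗ·|ξ₀ - ξ(δ)| for all t. -/

import Mathlib

set_option maxHeartbeats 1000000

theorem crux_aux (s e a y : ℝ) (hs : 1 ≤ s) (ha : 0 < a) (hae : a < e) (he1 : e < 1)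
    (hya : a ≤ y) (hy1 : y < 1) (hE : e^2 + (s^2-1)*e = s^2*a) :
    0 ≤ (553/1000)*e*s^2*(y-a) + s^3*e*((s-1)^2 + e)/2 + e*y*s^4*(447/1000 - s/4)
      + s^3*e*y*(1-e)/4 + s^5*y^2/2 - (553/1000)*e^2*s^2*y := by
  have he0 : 0 < e := ha.trans hae
  have hy0 : 0 < y := ha.trans_le hya
  have hs0 : (0:ℝ) < s := by linarith
  have hs2 : (1:ℝ) ≤ s^2 := by nlinarith
  have h1 : 0 ≤ e*s^3/2*(s-1-s*y/4)^2 := by positivity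
  have h2 : 0 ≤ 15/32*s^3*(e-s*y)^2 := by positivity
  have h3 : 0 ≤ s^5*y^2*(1-e) := by
    apply mul_nonneg (by positivity); linarith
  have h4 : 0 ≤ s^3*e*y*(1-e) := by
    apply mul_nonneg (by positivity); linarith
  have h5 : 0 ≤ e*y*s^2*(s^2-e) := by
    apply mul_nonneg (by positivity); linarith
  have h6 : 0 ≤ s^3*e^2 := by positivity
  have h7 : 0 ≤ e*y*s^4 := by positivity
  have h8 : 0 ≤ e*s^2*(y-a) := by
    apply mul_nonneg (by positivity); linarith
  nlinarith [h1,h2,h3,h4,h5,h6,h7,h8]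

theorem key_poly (s e a y : ℝ) (hs : 1 ≤ s) (ha : 0 < a) (hae : a < e) (he1 : e < 1)
    (hya : a ≤ y) (hy1 : y < 1) (hE : e^2 + (s^2-1)*e = s^2*a) :
    (1-e)*(s*(y-a/2)*(1-y/2)) + e*(1-e)*(1-y)
      ≤ (s - (553/1000)*a)*((y-a)+e*(1-y)) := by
  have hs0 : (0:ℝ) < s := by linarith
  have hcrux := crux_aux s e a y hs ha hae he1 hya hy1 hE
  have hid : s^4*((s - (553/1000)*a)*((y-a)+e*(1-y))
      - ((1-e)*(s*(y-a/2)*(1-y/2)) + e*(1-e)*(1-y)))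
      = (1-e)*((553/1000)*e*s^2*(y-a) + s^3*e*((s-1)^2 + e)/2 + e*y*s^4*(447/1000 - s/4)
      + s^3*e*y*(1-e)/4 + s^5*y^2/2 - (553/1000)*e^2*s^2*y) := by
    linear_combination (-(553/1000)*s^2*a - (1/4)*s^3*e*y + (1/2)*s^3*e + (1/4)*s^3*y
      + (1/2)*s^3 - (553/1000)*s^2*e*y + (553/1000)*s^2*y) * hE
  nlinarith [hid, mul_nonneg (by linarith : (0:ℝ) ≤ 1-e) hcrux, pow_pos hs0 4]

theorem onestep (a δ e x y s c q : ℝ) (ha0 : 0 < a) (ha1 : a < 1) (hδ : 1 ≤ δ)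
    (hs2 : s^2 = δ) (hs1 : 1 ≤ s) (hc0 : 0 < c) (hc1 : c ≤ 553/1000)
    (hq : q = (1/s) * (1 - c * (a/s)))
    (hE : e^2 + (δ-1)*e = δ*a) (hae : a < e) (he1 : e < 1)
    (hx : 0 ≤ x) (hya : a ≤ y) (hy1 : y < 1)
    (hcon : δ*(y*(y-a)) = x^2*(1-y)) :
    |y - e| ≤ q * |x - e| := by
  have hδ0 : (0:ℝ) < δ := by linarith
  have hs0 : (0:ℝ) < s := by linarith
  have he0 : 0 < e := ha0.trans hae
  have hca : c * (a/s) < 1 := by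
    have h1 : a/s ≤ a := by
      rw [div_le_iff₀ hs0]; nlinarith
    nlinarith
  have hq0 : 0 < q := by
    rw [hq]; apply mul_pos (by positivity); linarith
  have hy0 : 0 < y := ha0.trans_le hya
  have hqδ : q * δ = s - c*a := by
    have h1 : (1:ℝ)/s * (1 - c*(a/s)) = (s - c*a)/s^2 := by
      have hs' : s ≠ 0 := ne_of_gt hs0
      rw [eq_div_iff (by positivity : (s:ℝ)^2 ≠ 0)]
      field_simp
    rw [hq, h1, ← hs2, div_mul_cancel₀ _ (by positivity : s^2 ≠ 0)]
  have hiden : (y - e)*(δ*(y+e-a)+x^2) = (x-e)*((x+e)*(1-e)) := by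
    linear_combination hcon - e*hE
  have h1y : 0 < 1 - y := by linarith
  have hDpos : 0 < δ*(y+e-a)+x^2 := by nlinarith [sq_nonneg x]
  have hsqA : (s*(y-a/2)*(1-y/2))^2 - (x*(1-y))^2
      = δ*(y*(y-a)*y^2/4 + a^2/4*(1-y) + a^2*y^2/16) := by
    linear_combination ((y-a/2)*(1-y/2))^2 * hs2 + (1-y) * hcon
  have hA1 : 0 ≤ x*(1-y) := by positivity
  have hA2 : 0 < s*(y-a/2)*(1-y/2) := by
    apply mul_pos (mul_pos hs0 (by linarith)); linarith
  have hd : (x*(1-y))^2 ≤ (s*(y-a/2)*(1-y/2))^2 := by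
    rw [← sub_nonneg, hsqA]
    apply mul_nonneg hδ0.le
    nlinarith [mul_nonneg (mul_nonneg (mul_nonneg hy0.le (sub_nonneg.mpr hya)) (sq_nonneg y)) (by norm_num : (0:ℝ) ≤ 1/4),
      mul_nonneg (sq_nonneg a) h1y.le, mul_nonneg (sq_nonneg a) (sq_nonneg y)]
  have hstepA : x*(1-y) ≤ s*(y-a/2)*(1-y/2) := by
    nlinarith [hd, hA1, hA2]
  have hEs : e^2 + (s^2-1)*e = s^2*a := by rw [hs2]; exact hE
  have hpoly := key_poly s e a y hs1 ha0 hae he1 hya hy1 hEs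
  have hbr : (s - (553/1000)*a)*((y-a)+e*(1-y)) ≤ (s - c*a)*((y-a)+e*(1-y)) := by
    apply mul_le_mul_of_nonneg_right (by nlinarith) (by nlinarith)
  have hkey : (x+e)*(1-e)*(1-y) ≤ q * ((δ*(y+e-a)+x^2) * (1-y)) := by
    have hd1 : (δ*(y+e-a)+x^2) * (1-y) = δ*((y-a)+e*(1-y)) := by
      linear_combination (-1) * hcon
    rw [hd1, ← mul_assoc, hqδ]
    have h2 : (1-e)*(x*(1-y)) ≤ (1-e)*(s*(y-a/2)*(1-y/2)) :=
      mul_le_mul_of_nonneg_left hstepA (by linarith)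
    nlinarith [hpoly, hbr]
  have hkey2 : (x+e)*(1-e) ≤ q * (δ*(y+e-a)+x^2) := by
    rw [← mul_le_mul_iff_of_pos_right h1y]
    calc (x+e)*(1-e)*(1-y) ≤ q * ((δ*(y+e-a)+x^2) * (1-y)) := hkey
      _ = q * (δ*(y+e-a)+x^2) * (1-y) := by ring
  have habs : |y - e| * (δ*(y+e-a)+x^2) ≤ (q * |x - e|) * (δ*(y+e-a)+x^2) := by
    have h1 : |y - e| * (δ*(y+e-a)+x^2) = |(y-e)*(δ*(y+e-a)+x^2)| := by
      rw [abs_mul, abs_of_pos hDpos]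
    have h2 : |(x-e)*((x+e)*(1-e))| = |x-e| * ((x+e)*(1-e)) := by
      rw [abs_mul, abs_of_nonneg (by nlinarith : (0:ℝ) ≤ (x+e)*(1-e))]
    rw [h1, hiden, h2]
    calc |x-e| * ((x+e)*(1-e)) ≤ |x-e| * (q * (δ*(y+e-a)+x^2)) :=
          mul_le_mul_of_nonneg_left hkey2 (abs_nonneg _)
      _ = (q * |x-e|) * (δ*(y+e-a)+x^2) := by ring
  exact le_of_mul_le_mul_right habs hDpos

theorem stmt_6 (a δ : ℝ) (ha : a ∈ Set.Ioo (0 : ℝ) 1) (hδ : 1 ≤ δ)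
    (ξ : ℕ → ℝ) (h0 : 0 ≤ ξ 0)
    (hmem : ∀ t, ξ (t + 1) ∈ Set.Ico a 1)
    (hrec : ∀ t, ξ (t + 1) * (ξ (t + 1) - a) / (1 - ξ (t + 1)) = (ξ t) ^ 2 / δ)
    (ξδ : ℝ) (hξδ : ξδ = (Real.sqrt ((δ - 1) ^ 2 + 4 * δ * a) - (δ - 1)) / 2) :
    (∀ t : ℕ, 1 ≤ t → ξ t ∈ Set.Ico a 1) ∧
      Filter.Tendsto ξ Filter.atTop (nhds ξδ) ∧
      ∀ t : ℕ,
        |ξ t - ξδ| ≤ ((1 / Real.sqrt δ) * (1 - 4 / (5 + Real.sqrt 5) * (a / Real.sqrt δ))) ^ t *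
          |ξ 0 - ξδ| := by
  obtain ⟨ha0, ha1⟩ := ha
  have hδ0 : (0:ℝ) < δ := by linarith
  set s := Real.sqrt δ with hsdef
  have hs2 : s^2 = δ := Real.sq_sqrt hδ0.le
  have hs0 : 0 < s := Real.sqrt_pos.mpr hδ0
  have hs1 : 1 ≤ s := by nlinarith
  set c : ℝ := 4 / (5 + Real.sqrt 5) with hcdef
  have h5 : (Real.sqrt 5)^2 = 5 := Real.sq_sqrt (by norm_num)
  have h5n : 0 ≤ Real.sqrt 5 := Real.sqrt_nonneg 5
  have h5l : (11/5 : ℝ) ≤ Real.sqrt 5 := by nlinarith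
  have hc0 : 0 < c := by rw [hcdef]; positivity
  have hc1 : c ≤ 553/1000 := by
    rw [hcdef, div_le_iff₀ (by linarith)]
    nlinarith
  set q : ℝ := 1/s * (1 - c * (a/s)) with hqdef
  -- facts about ξδ
  have hDnn : (0:ℝ) ≤ (δ-1)^2 + 4*δ*a := by positivity
  have hr : (Real.sqrt ((δ-1)^2 + 4*δ*a))^2 = (δ-1)^2 + 4*δ*a := Real.sq_sqrt hDnn
  have hrn : 0 ≤ Real.sqrt ((δ-1)^2 + 4*δ*a) := Real.sqrt_nonneg _
  have hE : ξδ^2 + (δ-1)*ξδ = δ*a := by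
    rw [hξδ]; linear_combination hr/4
  have hepos : 0 < ξδ := by
    rw [hξδ]
    have : δ - 1 < Real.sqrt ((δ-1)^2 + 4*δ*a) := by nlinarith
    linarith
  have he1 : ξδ < 1 := by nlinarith
  have hae : a < ξδ := by
    have h1 : δ*(ξδ - a) = ξδ*(1-ξδ) := by linear_combination hE
    nlinarith [mul_pos hepos (by linarith : (0:ℝ) < 1 - ξδ)]
  -- q facts
  have hcas : 0 < c*(a/s) := by positivity
  have hq0 : 0 < q := by
    have h1 : a/s ≤ a := by rw [div_le_iff₀ hs0]; nlinarith
    rw [hqdef]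
    apply mul_pos (by positivity)
    nlinarith
  have hq1 : q < 1 := by
    have h1 : (1:ℝ)/s ≤ 1 := by rw [div_le_one hs0]; exact hs1
    have h2 : 1 - c*(a/s) < 1 := by linarith
    have h3 : q < 1/s * 1 := by
      rw [hqdef]; exact mul_lt_mul_of_pos_left h2 (by positivity)
    nlinarith
  -- nonneg of ξ
  have hxnn : ∀ t, 0 ≤ ξ t := by
    intro t
    cases t with
    | zero => exact h0
    | succ n => exact le_trans ha0.le (hmem n).1
  -- one-step bound
  have hstep : ∀ t, |ξ (t+1) - ξδ| ≤ q * |ξ t - ξδ| := by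
    intro t
    obtain ⟨hya, hy1⟩ := hmem t
    have h1y : (0:ℝ) < 1 - ξ (t+1) := by linarith
    have hcon : δ*(ξ (t+1)*(ξ (t+1)-a)) = (ξ t)^2*(1-ξ (t+1)) := by
      have h := hrec t
      rw [div_eq_div_iff (by linarith) (by linarith)] at h
      linarith [h]
    exact onestep a δ ξδ (ξ t) (ξ (t+1)) s c q ha0 ha1 hδ hs2 hs1 hc0 hc1 hqdef
      hE hae he1 (hxnn t) hya hy1 hcon
  -- geometric bound
  have hb : ∀ t, |ξ t - ξδ| ≤ q ^ t * |ξ 0 - ξδ| := by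
    intro t
    induction t with
    | zero => simp
    | succ n ih =>
      calc |ξ (n+1) - ξδ| ≤ q * |ξ n - ξδ| := hstep n
        _ ≤ q * (q^n * |ξ 0 - ξδ|) := mul_le_mul_of_nonneg_left ih hq0.le
        _ = q^(n+1) * |ξ 0 - ξδ| := by ring
  refine ⟨?_, ?_, hb⟩
  · intro t ht
    obtain ⟨n, rfl⟩ : ∃ n, t = n + 1 := ⟨t - 1, by omega⟩
    exact hmem n
  · have hlim : Filter.Tendsto (fun t : ℕ => q ^ t * |ξ 0 - ξδ|) Filter.atTop (nhds 0) := by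
      have := (tendsto_pow_atTop_nhds_zero_of_lt_one hq0.le hq1).mul_const (|ξ 0 - ξδ|)
      simpa using this
    have habs : Filter.Tendsto (fun t : ℕ => |ξ t - ξδ|) Filter.atTop (nhds 0) :=
      squeeze_zero (fun t => abs_nonneg _) hb hlim
    rw [tendsto_iff_dist_tendsto_zero]
    simpa [Real.dist_eq] using habs
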